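/- Let Γ be a group, σ a multiplier on Γ, and n ∈ ℕ. For a tuple (γ₀,…,γ_m) ∈ Γ^{m+1} let T_σ(γ₀,…,γ_m) := tr^σ_{(2)}(δ_{γ₀}*δ_{γ₁}*⋯*δ_{γ_m}), which equals the product ∏_{j=1}^{m} σ(γ₀γ₁⋯γ_{j−1}, γ_j) if γ₀γ₁⋯γ_m = e and 0 otherwise. For τ : Γ^{n+1} → ℂ define τ^σ : Γ^{n+1} → ℂ by τ^σ(γ₀,…,γ_n) := T_σ(γ₀,…,γ_n)·τ(γ₀,…,γ_n), and define the twisted cyclic coboundary B_σ taking τ : Γ^{n+1} → ℂ to B_στ : Γ^{n+2} → ℂ by (B_στ)(γ₀,…,γ_{n+1}) = (−1)^{n+1}·σ(γ_{n+1},γ₀)·τ(γ_{n+1}γ₀, γ₁,…,γ_n) + Σ_{i=0}^{n} (−1)^i·σ(γ_i,γ_{i+1})·τ(γ₀,…,γ_iγ_{i+1},…,γ_{n+1}). Then B_σ(τ^σ) = (B_1 τ)^σ, where B_1 denotes the same coboundary with the trivial multiplier σ ≡ 1. That is, the map τ ↦ τ^σ is a chain map, realizing the isomorphism between the group cochain complex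 of Γ and the complex of reduced cyclic cochains on ℂ(Γ,σ) localized at the identity. -/

import Mathlib

/-- The twisted convolution product on finitely supported functions `Γ →₀ ℂ`. -/
noncomputable def twistedConv {Γ : Type*} [Group Γ] (σ : Γ → Γ → ℂ)
    (f g : Γ →₀ ℂ) : Γ →₀ ℂ :=
  f.sum fun a ca => g.sum fun b cb => Finsupp.single (a * b) (ca * cb * σ a b)

/-- The iterated twisted convolution `δ_{γ₀} * δ_{γ₁} * ⋯ * δ_{γ_m}` of delta
functions (starting from the unit `δ_e`). -/
noncomputable def deltaConvProd {Γ : Type*} [Group Γ] (σ : Γ → Γ → ℂ)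
    (l : List Γ) : Γ →₀ ℂ :=
  l.foldl (fun acc a => twistedConv σ acc (Finsupp.single a (1 : ℂ)))
    (Finsupp.single (1 : Γ) (1 : ℂ))

/-- `T_σ(γ₀,…,γ_m) = tr^σ_{(2)}(δ_{γ₀} * δ_{γ₁} * ⋯ * δ_{γ_m})`. -/
noncomputable def Tsigma {Γ : Type*} [Group Γ] (σ : Γ → Γ → ℂ)
    (m : ℕ) (g : Fin (m + 1) → Γ) : ℂ :=
  deltaConvProd σ (List.ofFn g) 1

/-- The twist `τ^σ(γ₀,…,γ_n) = T_σ(γ₀,…,γ_n) · τ(γ₀,…,γ_n)` of a cochain. -/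
noncomputable def twistCochain {Γ : Type*} [Group Γ] (σ : Γ → Γ → ℂ)
    (n : ℕ) (τ : (Fin (n + 1) → Γ) → ℂ) : (Fin (n + 1) → Γ) → ℂ :=
  fun g => Tsigma σ n g * τ g

/-- The twisted cyclic coboundary `B_σ`. -/
noncomputable def cycCoboundary {Γ : Type*} [Group Γ] (σ : Γ → Γ → ℂ)
    (n : ℕ) (τ : (Fin (n + 1) → Γ) → ℂ) : (Fin (n + 2) → Γ) → ℂ :=
  fun g =>
    (-1 : ℂ) ^ (n + 1) * σ (g (Fin.last (n + 1))) (g 0) *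
      τ (Fin.cons (g (Fin.last (n + 1)) * g 0)
          (fun j : Fin n => g j.succ.castSucc))
    + ∑ i : Fin (n + 1), (-1 : ℂ) ^ (i : ℕ) * σ (g i.castSucc) (g i.succ) *
        τ (fun k : Fin (n + 1) =>
            if (k : ℕ) < (i : ℕ) then g k.castSucc
            else if (k : ℕ) = (i : ℕ) then g i.castSucc * g i.succ
            else g k.succ)

namespace ChainAux
variable {Γ : Type*} [Group Γ]

/-- weight of a list with base point -/
def W (σ : Γ → Γ → ℂ) : Γ → List Γ → ℂ
  | _, [] => 1
  | p, a :: t => σ p a * W σ (p * a) t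

lemma conv_single (σ : Γ → Γ → ℂ) (p a : Γ) (c d : ℂ) :
    twistedConv σ (Finsupp.single p c) (Finsupp.single a d)
      = Finsupp.single (p * a) (c * d * σ p a) := by
  unfold twistedConv
  rw [Finsupp.sum_single_index, Finsupp.sum_single_index]
  · simp
  · rw [Finsupp.sum_single_index] <;> simp

lemma foldl_eq (σ : Γ → Γ → ℂ) (l : List Γ) :
    ∀ p c, l.foldl (fun acc a => twistedConv σ acc (Finsupp.single a (1 : ℂ)))
      (Finsupp.single p c) = Finsupp.single (p * l.prod) (c * W σ p l) := by
  induction l with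
  | nil => intro p c; simp [W]
  | cons a t ih =>
    intro p c
    simp only [List.foldl_cons, conv_single, ih, W, List.prod_cons, mul_assoc, one_mul]

lemma Tsigma_eq [DecidableEq Γ] (σ : Γ → Γ → ℂ) (m : ℕ) (g : Fin (m + 1) → Γ) :
    Tsigma σ m g = if (List.ofFn g).prod = 1 then W σ 1 (List.ofFn g) else 0 := by
  unfold Tsigma deltaConvProd
  rw [foldl_eq, one_mul, one_mul, Finsupp.single_apply]


section hyp
variable (σ : Γ → Γ → ℂ)
  (hσone : ∀ γ : Γ, σ 1 γ = 1 ∧ σ γ 1 = 1)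
  (hσcoc : ∀ γ₁ γ₂ γ₃ : Γ,
    σ (γ₁ * γ₂) γ₃ * σ γ₁ γ₂ = σ γ₁ (γ₂ * γ₃) * σ γ₂ γ₃)
include hσcoc

omit hσcoc in
lemma W_ofFn (m : ℕ) (g : Fin m → Γ) : ∀ p : Γ,
    W σ p (List.ofFn g) = ∏ j : Fin m, σ (p * ((List.ofFn g).take (j : ℕ)).prod) (g j) := by
  induction m with
  | zero => intro p; simp [W]
  | succ m ih =>
    intro p
    rw [List.ofFn_succ, Fin.prod_univ_succ]
    simp only [W, List.take_succ_cons, List.prod_cons, List.take_zero, List.prod_nil, mul_one,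
      Fin.val_zero, Fin.val_succ]
    rw [ih (fun i => g i.succ) (p * g 0)]
    congr 1
    refine Finset.prod_congr rfl fun j _ => ?_
    rw [mul_assoc]

lemma Wmerge (l₁ : List Γ) : ∀ (p a b : Γ) (l₂ : List Γ),
    σ a b * W σ p (l₁ ++ (a * b) :: l₂) = W σ p (l₁ ++ a :: b :: l₂) := by
  induction l₁ with
  | nil =>
    intro p a b l₂
    simp only [List.nil_append, W]
    have h := hσcoc p a b
    rw [← mul_assoc p a b]
    linear_combination (-W σ (p * a * b) l₂) * h
  | cons c t ih =>
    intro p a b l₂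
    simp only [List.cons_append, List.append_eq, W]
    rw [← mul_assoc, mul_comm (σ a b) (σ p c), mul_assoc, ih]

omit hσcoc in
lemma W_append (l : List Γ) : ∀ (p a : Γ),
    W σ p (l ++ [a]) = W σ p l * σ (p * l.prod) a := by
  induction l with
  | nil => intro p a; simp [W]
  | cons c t ih =>
    intro p a
    simp only [List.cons_append, List.append_eq, W, List.prod_cons, ih, mul_assoc]

lemma Wshift (l : List Γ) : ∀ (a p : Γ),
    σ a p * W σ (a * p) l = σ a (p * l.prod) * W σ p l := by
  induction l with
  | nil => intro a p; simp [W]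
  | cons b t ih =>
    intro a p
    simp only [W, List.prod_cons]
    have h := hσcoc a p b
    have h2 := ih a (p * b)
    rw [← mul_assoc a p b] at h2
    calc σ a p * (σ (a * p) b * W σ (a * p * b) t)
        = σ (a * p) b * σ a p * W σ (a * p * b) t := by ring
      _ = σ a (p * b) * σ p b * W σ (a * p * b) t := by rw [h]
      _ = σ p b * (σ a (p * b) * W σ (a * p * b) t) := by ring
      _ = σ p b * (σ a (p * b * t.prod) * W σ (p * b) t) := by rw [h2]
      _ = σ a (p * (b * t.prod)) * (σ p b * W σ (p * b) t) := by
          rw [mul_assoc p b t.prod]; ring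

include hσone in
lemma sigma_inv (x : Γ) : σ x x⁻¹ = σ x⁻¹ x := by
  have h := hσcoc x x⁻¹ x
  simp only [mul_inv_cancel, inv_mul_cancel, (hσone x).1, (hσone x).2, one_mul, mul_one] at h
  exact h

end hyp

lemma faceList0 (m : ℕ) (g : Fin (m + 2) → Γ) :
    List.ofFn g = [] ++ g (0 : Fin (m+1)).castSucc :: g (0 : Fin (m+1)).succ ::
        List.ofFn (fun k : Fin m => g k.succ.succ) ∧
      List.ofFn (fun k : Fin (m + 1) =>
          if (k : ℕ) < ((0 : Fin (m+1)) : ℕ) then g k.castSucc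
          else if (k : ℕ) = ((0 : Fin (m+1)) : ℕ) then g (0 : Fin (m+1)).castSucc * g (0 : Fin (m+1)).succ
          else g k.succ)
        = [] ++ (g (0 : Fin (m+1)).castSucc * g (0 : Fin (m+1)).succ) ::
            List.ofFn (fun k : Fin m => g k.succ.succ) := by
  constructor
  · rw [List.ofFn_succ, List.ofFn_succ]
    simp
  · rw [List.ofFn_succ]
    simp

lemma faceList : ∀ (m : ℕ) (g : Fin (m + 2) → Γ) (i : Fin (m + 1)),
    ∃ l₁ l₂ : List Γ,
      List.ofFn g = l₁ ++ g i.castSucc :: g i.succ :: l₂ ∧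
      List.ofFn (fun k : Fin (m + 1) =>
          if (k : ℕ) < (i : ℕ) then g k.castSucc
          else if (k : ℕ) = (i : ℕ) then g i.castSucc * g i.succ
          else g k.succ)
        = l₁ ++ (g i.castSucc * g i.succ) :: l₂ := by
  intro m
  induction m with
  | zero =>
    intro g i
    have : i = 0 := Fin.ext (by omega)
    subst this
    exact ⟨_, _, faceList0 0 g⟩
  | succ m ih =>
    intro g i
    induction i using Fin.cases with
    | zero => exact ⟨_, _, faceList0 (m+1) g⟩
    | succ j =>
      obtain ⟨l₁, l₂, h1, h2⟩ := ih (fun k => g k.succ) j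
      refine ⟨g 0 :: l₁, l₂, ?_, ?_⟩
      · rw [List.ofFn_succ, h1]
        simp [Fin.succ_castSucc, -Fin.castSucc_succ]
      · rw [List.ofFn_succ]
        have hhead : (if ((0 : Fin (m+2)) : ℕ) < (j.succ : ℕ) then g (0 : Fin (m+2)).castSucc
            else if ((0 : Fin (m+2)) : ℕ) = (j.succ : ℕ) then g j.succ.castSucc * g j.succ.succ
            else g (0 : Fin (m+2)).succ) = g 0 := by
          simp
        have htail : (fun k : Fin (m + 1) =>
            if ((k.succ : Fin (m+2)) : ℕ) < (j.succ : ℕ) then g k.succ.castSucc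
            else if ((k.succ : Fin (m+2)) : ℕ) = (j.succ : ℕ) then g j.succ.castSucc * g j.succ.succ
            else g k.succ.succ) = (fun k : Fin (m + 1) =>
            if (k : ℕ) < (j : ℕ) then (fun k : Fin (m+2) => g k.succ) k.castSucc
            else if (k : ℕ) = (j : ℕ) then (fun k : Fin (m+2) => g k.succ) j.castSucc * (fun k : Fin (m+2) => g k.succ) j.succ
            else (fun k : Fin (m+2) => g k.succ) k.succ) := by
          funext k
          simp only [Fin.val_succ]
          by_cases hlt : (k : ℕ) < (j : ℕ)
          · rw [if_pos (by omega), if_pos hlt, Fin.succ_castSucc]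
          · rw [if_neg (by omega), if_neg hlt]
            by_cases heq : (k : ℕ) = (j : ℕ)
            · rw [if_pos (by omega), if_pos heq, Fin.succ_castSucc]
            · rw [if_neg (by omega), if_neg heq]
        rw [hhead, htail, h2]
        simp [Fin.succ_castSucc, -Fin.castSucc_succ]


lemma lemA [DecidableEq Γ] (σ : Γ → Γ → ℂ)
    (hσcoc : ∀ γ₁ γ₂ γ₃ : Γ,
      σ (γ₁ * γ₂) γ₃ * σ γ₁ γ₂ = σ γ₁ (γ₂ * γ₃) * σ γ₂ γ₃)
    (n : ℕ) (g : Fin (n + 2) → Γ) (i : Fin (n + 1)) :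
    σ (g i.castSucc) (g i.succ) * Tsigma σ n (fun k : Fin (n + 1) =>
        if (k : ℕ) < (i : ℕ) then g k.castSucc
        else if (k : ℕ) = (i : ℕ) then g i.castSucc * g i.succ
        else g k.succ)
      = Tsigma σ (n + 1) g := by
  obtain ⟨l₁, l₂, h1, h2⟩ := faceList n g i
  rw [Tsigma_eq, Tsigma_eq, h1, h2]
  have hp : (l₁ ++ (g i.castSucc * g i.succ) :: l₂).prod
      = (l₁ ++ g i.castSucc :: g i.succ :: l₂).prod := by
    simp [mul_assoc]
  rw [hp]
  split_ifs with h
  · exact Wmerge σ hσcoc l₁ 1 _ _ l₂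
  · exact mul_zero _

lemma lemB [DecidableEq Γ] (σ : Γ → Γ → ℂ)
    (hσone : ∀ γ : Γ, σ 1 γ = 1 ∧ σ γ 1 = 1)
    (hσcoc : ∀ γ₁ γ₂ γ₃ : Γ,
      σ (γ₁ * γ₂) γ₃ * σ γ₁ γ₂ = σ γ₁ (γ₂ * γ₃) * σ γ₂ γ₃)
    (n : ℕ) (g : Fin (n + 2) → Γ) :
    σ (g (Fin.last (n + 1))) (g 0) *
      Tsigma σ n (Fin.cons (g (Fin.last (n + 1)) * g 0)
        (fun j : Fin n => g j.succ.castSucc))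
      = Tsigma σ (n + 1) g := by
  set a := g (Fin.last (n + 1)) with ha
  set mid := List.ofFn (fun j : Fin n => g j.succ.castSucc) with hmid
  have h1 : List.ofFn (Fin.cons (a * g 0)
      (fun j : Fin n => g j.succ.castSucc) : Fin (n + 1) → Γ) = (a * g 0) :: mid := by
    rw [List.ofFn_succ]; simp [hmid, -Fin.castSucc_succ]
  have h2 : List.ofFn g = g 0 :: (mid ++ [a]) := by
    rw [List.ofFn_succ]
    congr 1
    rw [List.ofFn_succ' (fun i : Fin (n + 1) => g i.succ)]
    simp [hmid, List.concat_eq_append, Fin.succ_castSucc, -Fin.castSucc_succ, Fin.succ_last, ha]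
  rw [Tsigma_eq, Tsigma_eq, h1, h2]
  have hpc : ((a * g 0) :: mid).prod = a * (g 0 * mid.prod) := by
    simp [mul_assoc]
  have hpg : (g 0 :: (mid ++ [a])).prod = g 0 * mid.prod * a := by
    simp [mul_assoc]
  rw [hpc, hpg]
  have flip : ∀ x y : Γ, x * y = 1 → y * x = 1 := fun x y hxy => by
    rw [eq_inv_of_mul_eq_one_left hxy]; group
  by_cases h : g 0 * mid.prod * a = 1
  · have hainv : a = (g 0 * mid.prod)⁻¹ := eq_inv_of_mul_eq_one_right h
    rw [if_pos h, if_pos (flip _ _ h)]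
    simp only [W, one_mul, (hσone _).1]
    rw [W_append, Wshift σ hσcoc mid a (g 0)]
    rw [hainv, sigma_inv σ hσone hσcoc, mul_comm]
  · rw [if_neg h, if_neg (fun hc => h (flip _ _ hc)), mul_zero]

end ChainAux

/-- `T_σ(γ₀,…,γ_m)` equals `∏_{j=1}^m σ(γ₀⋯γ_{j−1}, γ_j)` when
`γ₀⋯γ_m = e` and `0` otherwise, and the map `τ ↦ τ^σ` is a chain map:
`B_σ(τ^σ) = (B_1 τ)^σ`, where `B_1` is the coboundary for the trivial
multiplier. -/
theorem twist_is_chain_map {Γ : Type*} [Group Γ] [DecidableEq Γ] (σ : Γ → Γ → ℂ)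
    (hσnorm : ∀ γ μ, ‖σ γ μ‖ = 1)
    (hσone : ∀ γ : Γ, σ 1 γ = 1 ∧ σ γ 1 = 1)
    (hσcoc : ∀ γ₁ γ₂ γ₃ : Γ,
      σ (γ₁ * γ₂) γ₃ * σ γ₁ γ₂ = σ γ₁ (γ₂ * γ₃) * σ γ₂ γ₃)
    (n : ℕ) :
    (∀ (m : ℕ) (g : Fin (m + 1) → Γ),
      Tsigma σ m g
        = if (List.ofFn g).prod = 1
          then ∏ j : Fin m, σ (((List.ofFn g).take ((j : ℕ) + 1)).prod) (g j.succ)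
          else 0) ∧
    (∀ τ : (Fin (n + 1) → Γ) → ℂ,
      cycCoboundary σ n (twistCochain σ n τ)
        = twistCochain σ (n + 1) (cycCoboundary (fun _ _ => (1 : ℂ)) n τ)) := by
  constructor
  · intro m g
    rw [ChainAux.Tsigma_eq]
    split_ifs with h
    · rw [ChainAux.W_ofFn σ (m + 1) g 1, Fin.prod_univ_succ]
      have h0 : σ (1 * ((List.ofFn g).take ((0 : Fin (m + 1)) : ℕ)).prod) (g 0) = 1 := by
        simpa using (hσone (g 0)).1
      rw [h0, one_mul]
      refine Finset.prod_congr rfl fun j _ => ?_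
      rw [one_mul, Fin.val_succ]
    · rfl
  · intro τ
    funext g
    simp only [cycCoboundary, twistCochain]
    rw [mul_add, Finset.mul_sum]
    congr 1
    · have hB := ChainAux.lemB σ hσone hσcoc n g
      linear_combination ((-1 : ℂ) ^ (n + 1) *
        τ (Fin.cons (g (Fin.last (n + 1)) * g 0)
          (fun j : Fin n => g j.succ.castSucc))) * hB
    · refine Finset.sum_congr rfl fun i _ => ?_
      have hA := ChainAux.lemA σ hσcoc n g i
      linear_combination ((-1 : ℂ) ^ (i : ℕ) *
        τ (fun k : Fin (n + 1) =>
            if (k : ℕ) < (i : ℕ) then g k.castSucc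
            else if (k : ℕ) = (i : ℕ) then g i.castSucc * g i.succ
            else g k.succ)) * hA
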